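/- Let f : ℝ × ℝ^n → ℝ be a time-varying cost such that, for every t ≥ 0, the map z ↦ f(t,z) is twice continuously differentiable, has positive definite Hessian, and attains its minimum at a unique point x*(t). Let σ, ρ > 0, p ∈ [0,1), q > 1, and let g : ℝ^n → ℝ^n satisfy ⟨g(y), y⟩ ≥ σ‖y‖₂^{1+p} + ρ‖y‖₂^{1+q} for all y ∈ ℝ^n. Suppose x : [0,∞) → ℝ^n is such that the map y(t) := ∇_z f(t, x(t)) is differentiable in t with y′(t) = −g(y(t)) for all t ≥ 0 (this is exactly the relation produced by the time-varying Newton flow ẋ = −∇²_{zz}f(t,x)^{−1}(g(∇_z f(t,x)) + ∂_t ∇_z f(t,x))). Then x(t) = x*(t) for all t ≥ T, where T = 1/(σ(1−p)) + 1/(ρ(q−1)); i.e. the trajectory tracks the optimal trajectory after a fixed time independent of x(0). (Proposition 4.) -/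

import Mathlib

open scoped RealInnerProductSpace


lemma grad_zero_isMin {n : ℕ} (F : EuclideanSpace ℝ (Fin n) → ℝ)
    (hF : ContDiff ℝ 2 F)
    (hpd : ∀ z h, h ≠ 0 → 0 < ⟪fderiv ℝ (gradient F) z h, h⟫)
    {a : EuclideanSpace ℝ (Fin n)} (ha : gradient F a = 0) : ∀ w, F a ≤ F w := by
  have hF1 : Differentiable ℝ F := hF.differentiable (by norm_num)
  have hgd : Differentiable ℝ (gradient F) := by
    have h1 : ContDiff ℝ 1 (fderiv ℝ F) := hF.fderiv_right (by norm_num)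
    have : Differentiable ℝ fun z =>
        (InnerProductSpace.toDual ℝ (EuclideanSpace ℝ (Fin n))).symm (fderiv ℝ F z) := by
      exact ((InnerProductSpace.toDual ℝ
        (EuclideanSpace ℝ (Fin n))).symm.toContinuousLinearEquiv.toContinuousLinearMap.differentiable).comp
        (h1.differentiable (by norm_num))
    exact this
  have hpd' : ∀ z h, 0 ≤ ⟪fderiv ℝ (gradient F) z h, h⟫ := by
    intro z h
    rcases eq_or_ne h 0 with rfl | hne
    · simp
    · exact (hpd z h hne).le
  intro w
  set v := w - a with hv
  set c : ℝ → EuclideanSpace ℝ (Fin n) := fun s => a + s • v with hc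
  have hcd : ∀ s : ℝ, HasDerivAt c v s := by
    intro s
    simpa [hc] using ((hasDerivAt_id s).smul_const v).const_add a
  set ψ : ℝ → ℝ := fun s => ⟪gradient F (c s), v⟫ with hψdef
  have hψ : ∀ s : ℝ, HasDerivAt ψ ⟪fderiv ℝ (gradient F) (c s) v, v⟫ s := by
    intro s
    have h1 : HasDerivAt (fun s => gradient F (c s)) (fderiv ℝ (gradient F) (c s) v) s :=
      ((hgd (c s)).hasFDerivAt).comp_hasDerivAt s (hcd s)
    have := (HasDerivAt.inner ℝ h1 (hasDerivAt_const s v))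
    simpa [hψdef] using this
  have hψmono : Monotone ψ :=
    monotone_of_hasDerivAt_nonneg hψ (fun s => hpd' (c s) v)
  have hψ0 : ψ 0 = 0 := by simp only [hψdef, hc, zero_smul, add_zero, ha, inner_zero_left]
  set φ : ℝ → ℝ := fun s => F (c s) with hφdef
  have hφ : ∀ s : ℝ, HasDerivAt φ (ψ s) s := by
    intro s
    have hg : HasGradientAt F (gradient F (c s)) (c s) := (hF1 (c s)).hasGradientAt
    have hfd : HasFDerivAt F (InnerProductSpace.toDual ℝ _ (gradient F (c s))) (c s) :=
      hasGradientAt_iff_hasFDerivAt.mp hg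
    have := hfd.comp_hasDerivAt s (hcd s)
    simpa [hψdef, hφdef, Function.comp_def, InnerProductSpace.toDual_apply_apply] using this
  have hφmono : MonotoneOn φ (Set.Icc (0:ℝ) 1) := by
    apply monotoneOn_of_hasDerivWithinAt_nonneg (f' := ψ) (convex_Icc 0 1)
    · exact fun s _ => (hφ s).continuousAt.continuousWithinAt
    · intro s hs; exact (hφ s).hasDerivWithinAt
    · intro s hs
      rw [interior_Icc] at hs
      have : ψ 0 ≤ ψ s := hψmono hs.1.le
      linarith [hψ0]
  have := hφmono (Set.mem_Icc.mpr ⟨le_rfl, zero_le_one⟩) (Set.mem_Icc.mpr ⟨zero_le_one, le_rfl⟩)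
    zero_le_one
  simpa [hφdef, hc, hv] using this


lemma fxt_grad_zero {n : ℕ} (f : ℝ → EuclideanSpace ℝ (Fin n) → ℝ)
    (σ ρ p q : ℝ) (hσ : 0 < σ) (hρ : 0 < ρ) (hp : p ∈ Set.Ico (0:ℝ) 1) (hq : 1 < q)
    (g : EuclideanSpace ℝ (Fin n) → EuclideanSpace ℝ (Fin n))
    (hg : ∀ y, σ * ‖y‖ ^ (1 + p) + ρ * ‖y‖ ^ (1 + q) ≤ ⟪g y, y⟫)
    (x : ℝ → EuclideanSpace ℝ (Fin n))
    (hy : ∀ t ≥ (0:ℝ),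
      HasDerivAt (fun s => gradient (f s) (x s)) (-(g (gradient (f t) (x t)))) t) :
    ∀ t : ℝ, 1 / (σ * (1 - p)) + 1 / (ρ * (q - 1)) ≤ t → gradient (f t) (x t) = 0 := by
  obtain ⟨hp0, hp1⟩ := hp
  intro t₀ hTt₀
  set T1 : ℝ := 1 / (ρ * (q - 1)) with hT1def
  set T2 : ℝ := 1 / (σ * (1 - p)) with hT2def
  have hq1 : 0 < q - 1 := by linarith
  have h1p : 0 < 1 - p := by linarith
  have hT1 : 0 < T1 := by positivity
  have hT2 : 0 < T2 := by positivity
  have ht₀0 : (0:ℝ) ≤ t₀ := by linarith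
  set y : ℝ → EuclideanSpace ℝ (Fin n) := fun s => gradient (f s) (x s) with hydef
  set W : ℝ → ℝ := fun s => ⟪y s, y s⟫ with hWdef
  set D : ℝ → ℝ := fun s => -(2 * ⟪g (y s), y s⟫) with hDdef
  have hW' : ∀ s : ℝ, 0 ≤ s → HasDerivAt W (D s) s := by
    intro s hs
    have hd : HasDerivAt y (-(g (y s))) s := hy s hs
    have h2 := HasDerivAt.inner ℝ hd hd
    have h3 : ⟪y s, -(g (y s))⟫ + ⟪-(g (y s)), y s⟫ = D s := by
      rw [inner_neg_right, inner_neg_left, real_inner_comm]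
      simp only [hDdef]
      ring
    rw [h3] at h2
    exact h2
  have hWnn : ∀ s, 0 ≤ W s := fun s => real_inner_self_nonneg
  have hWeq : ∀ s, W s = ‖y s‖ ^ (2:ℕ) := fun s => real_inner_self_eq_norm_sq (y s)
  have hWpow : ∀ s (c : ℝ), (W s) ^ c = ‖y s‖ ^ (2 * c) := by
    intro s c
    rw [hWeq s, ← Real.rpow_natCast (‖y s‖) 2, ← Real.rpow_mul (norm_nonneg _)]
    norm_num
  have hDp : ∀ s, D s ≤ -(2 * σ * (W s) ^ ((1 + p)/2)) := by
    intro s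
    have h1 := hg (y s)
    have h2 : (0:ℝ) ≤ ρ * ‖y s‖ ^ (1 + q) := by positivity
    have h3 : (W s) ^ ((1 + p)/2) = ‖y s‖ ^ (1 + p) := by
      rw [hWpow]; ring_nf
    rw [hDdef, h3]
    simp only
    nlinarith
  have hDq : ∀ s, D s ≤ -(2 * ρ * (W s) ^ ((1 + q)/2)) := by
    intro s
    have h1 := hg (y s)
    have h2 : (0:ℝ) ≤ σ * ‖y s‖ ^ (1 + p) := by positivity
    have h3 : (W s) ^ ((1 + q)/2) = ‖y s‖ ^ (1 + q) := by
      rw [hWpow]; ring_nf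
    rw [hDdef, h3]
    simp only
    nlinarith
  have hD0 : ∀ s, D s ≤ 0 := by
    intro s
    have h1 := hg (y s)
    have h2 : (0:ℝ) ≤ σ * ‖y s‖ ^ (1 + p) := by positivity
    have h3 : (0:ℝ) ≤ ρ * ‖y s‖ ^ (1 + q) := by positivity
    rw [hDdef]
    simp only
    nlinarith
  have hWanti : AntitoneOn W (Set.Icc 0 t₀) := by
    apply antitoneOn_of_hasDerivWithinAt_nonpos (f' := D) (convex_Icc 0 t₀)
    · exact fun s hs => (hW' s hs.1).continuousAt.continuousWithinAt
    · intro s hs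
      rw [interior_Icc] at hs
      exact (hW' s hs.1.le).hasDerivWithinAt
    · intro s hs
      exact hD0 s
  by_contra hne
  have hyne : y t₀ ≠ 0 := hne
  have hWt₀ : 0 < W t₀ := by
    have : 0 < ‖y t₀‖ := norm_pos_iff.mpr hyne
    rw [hWeq]; positivity
  have hWpos : ∀ s ∈ Set.Icc (0:ℝ) t₀, 0 < W s := by
    intro s hs
    exact lt_of_lt_of_le hWt₀ (hWanti hs (Set.mem_Icc.mpr ⟨ht₀0, le_rfl⟩) hs.2)
  have hT1t₀ : T1 ≤ t₀ := by linarith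
  have hlin1 : ∀ s : ℝ, HasDerivAt (fun u => ρ * (q - 1) * u) (ρ * (q - 1)) s := by
    intro s
    simpa using (hasDerivAt_id s).const_mul (ρ * (q - 1))
  have hlin2 : ∀ s : ℝ, HasDerivAt (fun u => σ * (1 - p) * u) (σ * (1 - p)) s := by
    intro s
    simpa using (hasDerivAt_id s).const_mul (σ * (1 - p))
  -- Phase 1 : show W T1 ≤ 1
  have hWT1 : W T1 ≤ 1 := by
    set e : ℝ := -(q - 1)/2 with hedef
    set Y : ℝ → ℝ := fun s => (W s) ^ e with hYdef
    have hY' : ∀ s ∈ Set.Icc (0:ℝ) t₀,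
        HasDerivAt Y (D s * e * (W s) ^ (e - 1)) s :=
      fun s hs => (hW' s hs.1).rpow_const (Or.inl (hWpos s hs).ne')
    have hkey : ∀ s ∈ Set.Icc (0:ℝ) t₀, ρ * (q - 1) ≤ D s * e * (W s) ^ (e - 1) := by
      intro s hs
      have hA : 0 < (W s) ^ (e - 1) := Real.rpow_pos_of_pos (hWpos s hs) _
      have hB : 0 < (W s) ^ ((1 + q)/2) := Real.rpow_pos_of_pos (hWpos s hs) _
      have hBA : (W s) ^ ((1 + q)/2) * (W s) ^ (e - 1) = 1 := by
        rw [← Real.rpow_add (hWpos s hs)]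
        have : (1 + q)/2 + (e - 1) = 0 := by rw [hedef]; ring
        rw [this, Real.rpow_zero]
      have hD := hDq s
      have h1 : D s * (W s) ^ (e - 1) ≤ -(2 * ρ * (W s) ^ ((1 + q)/2)) * (W s) ^ (e - 1) :=
        mul_le_mul_of_nonneg_right hD hA.le
      have h2 : -(2 * ρ * (W s) ^ ((1 + q)/2)) * (W s) ^ (e - 1) = -(2 * ρ) := by
        linear_combination (-(2 * ρ)) * hBA
      rw [h2] at h1
      have he : e = -(q - 1)/2 := hedef
      nlinarith
    have hmono : MonotoneOn (fun s => Y s - ρ * (q - 1) * s) (Set.Icc (0:ℝ) T1) := by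
      apply monotoneOn_of_hasDerivWithinAt_nonneg
        (f' := fun s => D s * e * (W s) ^ (e - 1) - ρ * (q - 1)) (convex_Icc 0 T1)
      · intro s hs
        have hs' : s ∈ Set.Icc (0:ℝ) t₀ := ⟨hs.1, le_trans hs.2 hT1t₀⟩
        exact (((hY' s hs').sub (hlin1 s)).continuousAt).continuousWithinAt
      · intro s hs
        rw [interior_Icc] at hs
        have hs' : s ∈ Set.Icc (0:ℝ) t₀ := ⟨hs.1.le, le_trans hs.2.le hT1t₀⟩
        exact ((hY' s hs').sub (hlin1 s)).hasDerivWithinAt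
      · intro s hs
        rw [interior_Icc] at hs
        have hs' : s ∈ Set.Icc (0:ℝ) t₀ := ⟨hs.1.le, le_trans hs.2.le hT1t₀⟩
        have := hkey s hs'
        linarith
    have h0T1 := hmono (Set.mem_Icc.mpr ⟨le_rfl, hT1.le⟩)
      (Set.mem_Icc.mpr ⟨hT1.le, le_rfl⟩) hT1.le
    have hprod : ρ * (q - 1) * T1 = 1 := by
      rw [hT1def]; field_simp
    have hY0 : 0 < Y 0 := Real.rpow_pos_of_pos (hWpos 0 ⟨le_rfl, ht₀0⟩) _
    have hYT1 : 1 < Y T1 := by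
      simp only [mul_zero, sub_zero] at h0T1
      rw [hprod] at h0T1
      linarith
    by_contra hcon
    push_neg at hcon
    have : Y T1 ≤ 1 := Real.rpow_le_one_of_one_le_of_nonpos hcon.le (by rw [hedef]; linarith)
    linarith
  -- Phase 2 : drive to zero with the p-term
  set e2 : ℝ := (1 - p)/2 with he2def
  set Z : ℝ → ℝ := fun s => (W s) ^ e2 with hZdef
  have hZ' : ∀ s ∈ Set.Icc (0:ℝ) t₀,
      HasDerivAt Z (D s * e2 * (W s) ^ (e2 - 1)) s :=
    fun s hs => (hW' s hs.1).rpow_const (Or.inl (hWpos s hs).ne')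
  have hkey2 : ∀ s ∈ Set.Icc (0:ℝ) t₀, D s * e2 * (W s) ^ (e2 - 1) ≤ -(σ * (1 - p)) := by
    intro s hs
    have hA : 0 < (W s) ^ (e2 - 1) := Real.rpow_pos_of_pos (hWpos s hs) _
    have hBA : (W s) ^ ((1 + p)/2) * (W s) ^ (e2 - 1) = 1 := by
      rw [← Real.rpow_add (hWpos s hs)]
      have : (1 + p)/2 + (e2 - 1) = 0 := by rw [he2def]; ring
      rw [this, Real.rpow_zero]
    have hD := hDp s
    have h1 : D s * (W s) ^ (e2 - 1) ≤ -(2 * σ * (W s) ^ ((1 + p)/2)) * (W s) ^ (e2 - 1) :=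
      mul_le_mul_of_nonneg_right hD hA.le
    have h2 : -(2 * σ * (W s) ^ ((1 + p)/2)) * (W s) ^ (e2 - 1) = -(2 * σ) := by
      linear_combination (-(2 * σ)) * hBA
    rw [h2] at h1
    have he : e2 = (1 - p)/2 := he2def
    nlinarith
  have hanti : AntitoneOn (fun s => Z s + σ * (1 - p) * s) (Set.Icc T1 t₀) := by
    apply antitoneOn_of_hasDerivWithinAt_nonpos
      (f' := fun s => D s * e2 * (W s) ^ (e2 - 1) + σ * (1 - p)) (convex_Icc T1 t₀)
    · intro s hs
      have hs' : s ∈ Set.Icc (0:ℝ) t₀ := ⟨le_trans hT1.le hs.1, hs.2⟩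
      exact (((hZ' s hs').add (hlin2 s)).continuousAt).continuousWithinAt
    · intro s hs
      rw [interior_Icc] at hs
      have hs' : s ∈ Set.Icc (0:ℝ) t₀ := ⟨le_trans hT1.le hs.1.le, hs.2.le⟩
      exact ((hZ' s hs').add (hlin2 s)).hasDerivWithinAt
    · intro s hs
      rw [interior_Icc] at hs
      have hs' : s ∈ Set.Icc (0:ℝ) t₀ := ⟨le_trans hT1.le hs.1.le, hs.2.le⟩
      have := hkey2 s hs'
      linarith
  have hfin := hanti (Set.mem_Icc.mpr ⟨le_rfl, hT1t₀⟩)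
    (Set.mem_Icc.mpr ⟨hT1t₀, le_rfl⟩) hT1t₀
  have hZT1 : Z T1 ≤ 1 :=
    Real.rpow_le_one (hWnn T1) hWT1 (by rw [he2def]; linarith)
  have hprod2 : σ * (1 - p) * T2 = 1 := by
    rw [hT2def]; field_simp
  have hZt₀ : 0 < Z t₀ := Real.rpow_pos_of_pos hWt₀ _
  have hstep : σ * (1 - p) * T2 ≤ σ * (1 - p) * (t₀ - T1) := by
    apply mul_le_mul_of_nonneg_left _ (by positivity)
    linarith
  simp only at hfin
  nlinarith

/-- Proposition 4: fixed-time tracking of the optimal trajectory by the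
time-varying Newton-based FxT gradient flow. -/
theorem time_varying_newton_fxtgf_tracking
    {n : ℕ} (f : ℝ → EuclideanSpace ℝ (Fin n) → ℝ)
    (hf : ∀ t ≥ (0:ℝ), ContDiff ℝ 2 (f t))
    (hpd : ∀ t ≥ (0:ℝ), ∀ z h, h ≠ 0 → 0 < ⟪fderiv ℝ (gradient (f t)) z h, h⟫)
    (xstar : ℝ → EuclideanSpace ℝ (Fin n))
    (hmin : ∀ t ≥ (0:ℝ), ∀ z, f t (xstar t) ≤ f t z)
    (huniq : ∀ t ≥ (0:ℝ), ∀ z, (∀ w, f t z ≤ f t w) → z = xstar t)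
    (σ ρ p q : ℝ) (hσ : 0 < σ) (hρ : 0 < ρ) (hp : p ∈ Set.Ico (0:ℝ) 1) (hq : 1 < q)
    (g : EuclideanSpace ℝ (Fin n) → EuclideanSpace ℝ (Fin n))
    (hg : ∀ y, σ * ‖y‖ ^ (1 + p) + ρ * ‖y‖ ^ (1 + q) ≤ ⟪g y, y⟫)
    (x : ℝ → EuclideanSpace ℝ (Fin n))
    (hy : ∀ t ≥ (0:ℝ),
      HasDerivAt (fun s => gradient (f s) (x s)) (-(g (gradient (f t) (x t)))) t) :
    ∀ t : ℝ, 1 / (σ * (1 - p)) + 1 / (ρ * (q - 1)) ≤ t → x t = xstar t := by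
  intro t hT
  have hT1 : 0 < 1 / (ρ * (q - 1)) := by
    have : 0 < q - 1 := by linarith
    positivity
  have hT2 : 0 < 1 / (σ * (1 - p)) := by
    have : 0 < 1 - p := by linarith [hp.2]
    positivity
  have h0 : (0:ℝ) ≤ t := by linarith
  have hg0 : gradient (f t) (x t) = 0 :=
    fxt_grad_zero f σ ρ p q hσ hρ hp hq g hg x hy t hT
  exact huniq t h0 (x t) (grad_zero_isMin (f t) (hf t h0) (hpd t h0) hg0)
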